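/- Let g : ℝ → ℝ be continuously differentiable, 1-periodic (g(x+1) = g(x) for all x ∈ ℝ), and of zero mean, ∫₀¹ g(x) dx = 0. Then sup_{x∈ℝ} |g(x)| ≤ (∫₀¹ g'(x)² dx)^{1/2}. -/

import Mathlib

open Set Real

/-- For a `C¹`, `1`-periodic function `g` of zero mean one has
`sup_{x∈ℝ} |g(x)| ≤ (∫₀¹ g'(x)² dx)^{1/2}`. -/
theorem periodic_sup_le_L2_of_deriv
    (g g' : ℝ → ℝ)
    (hg : ∀ x : ℝ, HasDerivAt g (g' x) x)
    (hg' : Continuous g')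
    (hper : ∀ x : ℝ, g (x + 1) = g x)
    (hmean : (∫ x in (0:ℝ)..1, g x) = 0) :
    ∀ x : ℝ, |g x| ≤ Real.sqrt (∫ x in (0:ℝ)..1, (g' x) ^ 2) := by
  intro x
  have hgc : Continuous g :=
    continuous_iff_continuousAt.2 fun y => (hg y).continuousAt
  -- g' is 1-periodic
  have hP : Function.Periodic g 1 := hper
  have hP' : Function.Periodic g' 1 := by
    intro y
    have h1 : HasDerivAt (fun t => g (t + 1)) (g' (y + 1)) y := by
      simpa [Function.comp_def] using (hg (y + 1)).comp y ((hasDerivAt_id y).add_const (1 : ℝ))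
    have heq : (fun t : ℝ => g (t + 1)) = g := funext hper
    rw [heq] at h1
    exact h1.unique (hg y)
  -- there is a zero of g in (0,1)
  have hG : ∀ t : ℝ, HasDerivAt (fun u => ∫ s in (0:ℝ)..u, g s) (g t) t := by
    intro t
    exact intervalIntegral.integral_hasDerivAt_right
      (hgc.intervalIntegrable 0 t) (hgc.stronglyMeasurableAtFilter _ _)
      hgc.continuousAt
  obtain ⟨c, hc01, hc⟩ := exists_hasDerivAt_eq_slope (fun u => ∫ s in (0:ℝ)..u, g s) g
    (by norm_num : (0:ℝ) < 1)
    (fun t _ => (hG t).continuousAt.continuousWithinAt)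
    (fun t _ => hG t)
  have hgc0 : g c = 0 := by
    simpa [hmean] using hc
  -- the chosen zero near x
  set n : ℤ := ⌊x - c⌋ with hn
  set x₀ : ℝ := c + n with hx₀
  have hgx₀ : g x₀ = 0 := by
    have := (hP.int_mul n) c
    simpa [hx₀, hgc0] using this
  have hle : x₀ ≤ x := by
    have := Int.floor_le (x - c)
    simp only [hx₀, hn]
    linarith
  have hlt : x < x₀ + 1 := by
    have := Int.lt_floor_add_one (x - c)
    simp only [hx₀, hn]
    linarith
  -- FTC
  have hftc : g x - g x₀ = ∫ t in x₀..x, g' t :=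
    (intervalIntegral.integral_eq_sub_of_hasDerivAt (fun t _ => hg t)
      (hg'.intervalIntegrable _ _)).symm
  have hgx : g x = ∫ t in x₀..x, g' t := by
    rw [← hftc, hgx₀]; ring
  set I : ℝ := ∫ t in (0:ℝ)..1, (g' t) ^ 2 with hI
  have hInonneg : 0 ≤ I := by
    apply intervalIntegral.integral_nonneg (by norm_num)
    intro t _; positivity
  -- the truncated integral of g'^2 is at most I
  have hsqper : Function.Periodic (fun t => (g' t) ^ 2) 1 := fun t => by
    simp [hP' t]
  have hshift : (∫ t in x₀..(x₀ + 1), (g' t) ^ 2) = I := by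
    simpa using hsqper.intervalIntegral_add_eq x₀ 0
  have hsplit : (∫ t in x₀..x, (g' t) ^ 2) + (∫ t in x..(x₀ + 1), (g' t) ^ 2)
      = ∫ t in x₀..(x₀ + 1), (g' t) ^ 2 :=
    intervalIntegral.integral_add_adjacent_intervals
      ((hg'.pow 2).intervalIntegrable _ _) ((hg'.pow 2).intervalIntegrable _ _)
  have htail : 0 ≤ ∫ t in x..(x₀ + 1), (g' t) ^ 2 := by
    apply intervalIntegral.integral_nonneg (le_of_lt hlt)
    intro t _; positivity
  have htrunc : (∫ t in x₀..x, (g' t) ^ 2) ≤ I := by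
    rw [← hshift, ← hsplit]; linarith
  -- key bound: for every l > 0, |g x| ≤ (l * I + 1/l) / 2
  have key : ∀ l : ℝ, 0 < l → |g x| ≤ (l * I + 1 / l) / 2 := by
    intro l hl
    have h1 : |g x| ≤ ∫ t in x₀..x, |g' t| := by
      rw [hgx]
      exact intervalIntegral.abs_integral_le_integral_abs hle
    have h2 : (∫ t in x₀..x, |g' t|) ≤ ∫ t in x₀..x, (l * (g' t) ^ 2 + 1 / l) / 2 := by
      apply intervalIntegral.integral_mono_on hle
        (hg'.abs.intervalIntegrable _ _)
        ((((continuous_const.mul (hg'.pow 2)).add continuous_const).div_const 2).intervalIntegrable _ _)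
      intro t _
      have hstep : 2 * l * |g' t| ≤ l ^ 2 * g' t ^ 2 + 1 := by
        nlinarith [sq_nonneg (l * |g' t| - 1), sq_abs (g' t)]
      have hl' : (0:ℝ) < 2 * l := by linarith
      have heq : (l * g' t ^ 2 + 1 / l) / 2 = (l ^ 2 * g' t ^ 2 + 1) / (2 * l) := by
        field_simp
      show |g' t| ≤ (l * g' t ^ 2 + 1 / l) / 2
      rw [heq, le_div_iff₀ hl']
      nlinarith [hstep]
    have h3 : (∫ t in x₀..x, (l * (g' t) ^ 2 + 1 / l) / 2)
        = (l * (∫ t in x₀..x, (g' t) ^ 2) + (x - x₀) * (1 / l)) / 2 := by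
      rw [intervalIntegral.integral_div, intervalIntegral.integral_add (f := fun t => l * g' t ^ 2)
        (((continuous_const.mul (hg'.pow 2)).intervalIntegrable _ _ :
          IntervalIntegrable (fun t => l * g' t ^ 2) MeasureTheory.volume x₀ x))
        (intervalIntegrable_const),
        intervalIntegral.integral_const_mul, intervalIntegral.integral_const,
        smul_eq_mul]
    have h4 : (x - x₀) * (1 / l) ≤ 1 / l := by
      have : x - x₀ ≤ 1 := by linarith
      have h1l : 0 ≤ 1 / l := by positivity
      nlinarith
    have h5 : l * (∫ t in x₀..x, (g' t) ^ 2) ≤ l * I :=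
      mul_le_mul_of_nonneg_left htrunc hl.le
    calc |g x| ≤ ∫ t in x₀..x, (l * (g' t) ^ 2 + 1 / l) / 2 := h1.trans h2
      _ = (l * (∫ t in x₀..x, (g' t) ^ 2) + (x - x₀) * (1 / l)) / 2 := h3
      _ ≤ (l * I + 1 / l) / 2 := by linarith
  -- conclude
  rcases eq_or_lt_of_le hInonneg with h0 | hpos
  · have : |g x| ≤ 0 := by
      apply le_of_forall_pos_le_add
      intro ε hε
      have := key (1 / ε) (by positivity)
      rw [← h0] at this
      calc |g x| ≤ ((1 / ε) * 0 + 1 / (1 / ε)) / 2 := this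
        _ = ε / 2 := by field_simp; ring
        _ ≤ 0 + ε := by linarith
    calc |g x| ≤ 0 := this
      _ ≤ Real.sqrt I := Real.sqrt_nonneg I
  · have hS : 0 < Real.sqrt I := Real.sqrt_pos.2 hpos
    have hSsq : Real.sqrt I ^ 2 = I := Real.sq_sqrt hInonneg
    have := key (1 / Real.sqrt I) (by positivity)
    calc |g x| ≤ ((1 / Real.sqrt I) * I + 1 / (1 / Real.sqrt I)) / 2 := this
      _ = Real.sqrt I := by
          have hmul : (1 / Real.sqrt I) * I = Real.sqrt I := by
            rw [one_div, inv_mul_eq_div, Real.div_sqrt]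
          rw [hmul, one_div_one_div]
          ring
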